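/- Let l ≥ 1 be an integer. For n ∈ {1,…,l} set a_n = (2/(l+1))·sin²(πn/(l+1)), E_n = 2·cos(πn/(l+1)), and c_n = Σ_{1≤m≤l, m≢n mod 2} a_m/(E_m − E_n). For m ∈ {1,…,l} define D_m = Σ_{1≤n≤l, n≠m} (8·a_m·a_n/(E_n − E_m)) · ( c_m + c_n − Σ_{1≤k≤l, k≠m} a_k/(E_k − E_m) + a_m/(E_n − E_m) ). Then |D_m| < 16(l+1)³ for every m ∈ {1,…,l}. -/

import Mathlib

open Real Finset

/-- `a_n = (2/(l+1)) sin²(πn/(l+1))`. -/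
noncomputable def aa (l n : ℕ) : ℝ := (2/((l : ℝ)+1)) * Real.sin (π*n/(l+1))^2

/-- `E_n = 2 cos(πn/(l+1))`. -/
noncomputable def EE (l n : ℕ) : ℝ := 2 * Real.cos (π*n/(l+1))

/-- `c_n = Σ_{1 ≤ m ≤ l, m ≢ n mod 2} a_m / (E_m − E_n)`. -/
noncomputable def cc (l n : ℕ) : ℝ :=
  ∑ m ∈ (Finset.Icc 1 l).filter (fun m => ¬ (m % 2 = n % 2)), aa l m / (EE l m - EE l n)



lemma sin_lb' {a x : ℝ} (ha : 0 ≤ a) (hax : a ≤ x) (hx : x ≤ π - a) :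
    2 / π * a ≤ Real.sin x := by
  have hπ := Real.pi_pos
  rcases le_or_gt x (π/2) with h | h
  · calc 2/π*a ≤ 2/π*x := by
          apply mul_le_mul_of_nonneg_left hax (by positivity)
    _ ≤ Real.sin x := Real.mul_le_sin (le_trans ha hax) h
  · rw [← Real.sin_pi_sub]
    calc 2/π*a ≤ 2/π*(π-x) := mul_le_mul_of_nonneg_left (by linarith) (by positivity)
    _ ≤ Real.sin (π - x) := Real.mul_le_sin (by linarith) (by linarith)

lemma sin_ge_inv {L t : ℝ} (hL : 2 ≤ L) (ht1 : 1 ≤ t) (ht2 : t ≤ 2*L - 1) :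
    1/L ≤ Real.sin (π*t/(2*L)) := by
  have hπ := Real.pi_pos
  have hLpos : (0:ℝ) < L := by linarith
  have h := sin_lb' (a := π/(2*L)) (x := π*t/(2*L)) (by positivity) ?_ ?_
  · calc 1/L = 2/π * (π/(2*L)) := by field_simp
    _ ≤ _ := h
  · rw [div_le_div_iff₀ (by positivity) (by positivity)]
    nlinarith [mul_nonneg (mul_nonneg hπ.le (by linarith : (0:ℝ) ≤ 2*L)) (by linarith : (0:ℝ) ≤ t - 1)]
  · rw [div_le_iff₀ (by positivity)]
    have heq : (π - π/(2*L))*(2*L) = π*(2*L-1) := by field_simp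
    rw [heq]
    nlinarith [mul_nonneg (mul_nonneg hπ.le (by linarith : (0:ℝ) ≤ 2*L)) (by linarith : (0:ℝ) ≤ 2*L-1-t)]

lemma EE_gap {l k m : ℕ} (hk1 : 1 ≤ k) (hml : m ≤ l) (hkm : k < m) :
    4 / ((l:ℝ)+1)^2 ≤ EE l k - EE l m := by
  have hπ := Real.pi_pos
  set L : ℝ := (l:ℝ) + 1 with hL
  have hL2 : (2:ℝ) ≤ L := by
    have : (1:ℝ) ≤ (l:ℝ) := by exact_mod_cast (hk1.trans (hkm.le.trans hml))
    linarith
  have hLpos : (0:ℝ) < L := by linarith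
  have hck : (k:ℝ) ≥ 1 := by exact_mod_cast hk1
  have hcm : (m:ℝ) ≤ (l:ℝ) := by exact_mod_cast hml
  have hckm : (k:ℝ) + 1 ≤ (m:ℝ) := by exact_mod_cast hkm
  have key : EE l k - EE l m =
      4 * Real.sin (π*(k+m)/(2*L)) * Real.sin (π*(m-k)/(2*L)) := by
    rw [EE, EE, ← mul_sub, Real.cos_sub_cos]
    have h1 : (π*k/L + π*m/L)/2 = π*(k+m)/(2*L) := by field_simp
    have h2 : (π*k/L - π*m/L)/2 = -(π*((m:ℝ)-k)/(2*L)) := by field_simp; ring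
    rw [h1, h2, Real.sin_neg]; ring
  rw [key]
  have hs1 : 1/L ≤ Real.sin (π*((k:ℝ)+m)/(2*L)) :=
    sin_ge_inv hL2 (by linarith) (by simp only [hL]; push_cast; linarith)
  have hs2 : 1/L ≤ Real.sin (π*((m:ℝ)-k)/(2*L)) :=
    sin_ge_inv hL2 (by linarith) (by simp only [hL]; push_cast; linarith)
  have h1L : (0:ℝ) < 1/L := by positivity
  calc 4/L^2 = 4 * (1/L) * (1/L) := by field_simp
  _ ≤ _ := by nlinarith

lemma EE_gap' {l k m : ℕ} (hk : k ∈ Finset.Icc 1 l) (hm : m ∈ Finset.Icc 1 l) (hne : k ≠ m) :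
    4 / ((l:ℝ)+1)^2 ≤ |EE l k - EE l m| := by
  simp only [Finset.mem_Icc] at hk hm
  rcases lt_or_gt_of_ne hne with h | h
  · exact le_trans (EE_gap hk.1 hm.2 h) (le_abs_self _)
  · rw [abs_sub_comm]
    exact le_trans (EE_gap hm.1 hk.2 h) (le_abs_self _)

lemma aa_nonneg (l n : ℕ) : 0 ≤ aa l n := by
  unfold aa; positivity

lemma aa_le (l n : ℕ) : aa l n ≤ 2/((l:ℝ)+1) := by
  unfold aa
  have : Real.sin (π*n/(l+1))^2 ≤ 1 := Real.sin_sq_le_one _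
  have h0 : (0:ℝ) ≤ 2/((l:ℝ)+1) := by positivity
  calc 2/((l:ℝ)+1) * Real.sin (π*n/((l:ℝ)+1))^2 ≤ 2/((l:ℝ)+1) * 1 :=
        mul_le_mul_of_nonneg_left this h0
  _ = 2/((l:ℝ)+1) := mul_one _

lemma frac_bound {l k m : ℕ} (hk : k ∈ Finset.Icc 1 l) (hm : m ∈ Finset.Icc 1 l) (hne : k ≠ m) :
    |aa l k / (EE l k - EE l m)| ≤ ((l:ℝ)+1)/2 := by
  have hLpos : (0:ℝ) < (l:ℝ)+1 := by positivity
  have hgap := EE_gap' hk hm hne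
  have hgap0 : (0:ℝ) < 4/((l:ℝ)+1)^2 := by positivity
  rw [abs_div, abs_of_nonneg (aa_nonneg l k)]
  calc aa l k / |EE l k - EE l m| ≤ (2/((l:ℝ)+1)) / (4/((l:ℝ)+1)^2) :=
        div_le_div₀ (by positivity) (aa_le l k) hgap0 hgap
  _ = ((l:ℝ)+1)/2 := by field_simp; ring

lemma frac_bound2 {l k m : ℕ} (hk : k ∈ Finset.Icc 1 l) (hm : m ∈ Finset.Icc 1 l) (hne : k ≠ m) :
    |aa l k / (EE l m - EE l k)| ≤ ((l:ℝ)+1)/2 := by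
  rw [abs_div, abs_sub_comm, ← abs_div]
  exact frac_bound hk hm hne


lemma cc_bound {l n : ℕ} (hn : n ∈ Finset.Icc 1 l) : |cc l n| ≤ (l:ℝ) * (((l:ℝ)+1)/2) := by
  rw [cc]
  calc |∑ m ∈ (Finset.Icc 1 l).filter (fun m => ¬ (m % 2 = n % 2)), aa l m / (EE l m - EE l n)|
      ≤ ∑ m ∈ (Finset.Icc 1 l).filter (fun m => ¬ (m % 2 = n % 2)), |aa l m / (EE l m - EE l n)| :=
        Finset.abs_sum_le_sum_abs _ _
  _ ≤ ∑ _m ∈ (Finset.Icc 1 l).filter (fun m => ¬ (m % 2 = n % 2)), ((l:ℝ)+1)/2 := by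
        apply Finset.sum_le_sum
        intro k hk
        simp only [Finset.mem_filter] at hk
        exact frac_bound hk.1 hn (fun h => hk.2 (by rw [h]))
  _ = ((Finset.Icc 1 l).filter (fun m => ¬ (m % 2 = n % 2))).card * (((l:ℝ)+1)/2) := by
        rw [Finset.sum_const, nsmul_eq_mul]
  _ ≤ (l:ℝ) * (((l:ℝ)+1)/2) := by
        apply mul_le_mul_of_nonneg_right _ (by positivity)
        have : ((Finset.Icc 1 l).filter (fun m => ¬ (m % 2 = n % 2))).card ≤ l := by
          calc _ ≤ (Finset.Icc 1 l).card := Finset.card_filter_le _ _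
          _ = l := by simp
        exact_mod_cast this


/-- The bound `|D_m| < 16(l+1)³` for the correction term `D_m`. -/
theorem stmt_14 (l : ℕ) (hl : 1 ≤ l) (m : ℕ) (hm : m ∈ Finset.Icc 1 l) :
    |∑ n ∈ (Finset.Icc 1 l).erase m,
        (8 * aa l m * aa l n / (EE l n - EE l m)) *
          (cc l m + cc l n - (∑ k ∈ (Finset.Icc 1 l).erase m, aa l k / (EE l k - EE l m))
            + aa l m / (EE l n - EE l m))|
      < 16 * ((l : ℝ) + 1)^3 := by
  set L : ℝ := (l:ℝ) + 1 with hL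
  have hLpos : (0:ℝ) < L := by positivity
  have hl1 : (1:ℝ) ≤ (l:ℝ) := by exact_mod_cast hl
  have hlL : (l:ℝ) ≤ L - 1 := by simp [hL]
  -- bound on the inner sum
  have hS : |∑ k ∈ (Finset.Icc 1 l).erase m, aa l k / (EE l k - EE l m)| ≤ (l:ℝ) * (L/2) := by
    calc _ ≤ ∑ k ∈ (Finset.Icc 1 l).erase m, |aa l k / (EE l k - EE l m)| :=
          Finset.abs_sum_le_sum_abs _ _
    _ ≤ ∑ _k ∈ (Finset.Icc 1 l).erase m, L/2 := by
          apply Finset.sum_le_sum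
          intro k hk
          exact frac_bound (Finset.mem_of_mem_erase hk) hm (Finset.ne_of_mem_erase hk)
    _ = ((Finset.Icc 1 l).erase m).card * (L/2) := by rw [Finset.sum_const, nsmul_eq_mul]
    _ ≤ (l:ℝ) * (L/2) := by
          apply mul_le_mul_of_nonneg_right _ (by positivity)
          have : ((Finset.Icc 1 l).erase m).card ≤ l := by
            calc _ ≤ (Finset.Icc 1 l).card := Finset.card_erase_le
            _ = l := by simp
          exact_mod_cast this
  have hterm : ∀ n ∈ (Finset.Icc 1 l).erase m,
      |(8 * aa l m * aa l n / (EE l n - EE l m)) *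
          (cc l m + cc l n - (∑ k ∈ (Finset.Icc 1 l).erase m, aa l k / (EE l k - EE l m))
            + aa l m / (EE l n - EE l m))| ≤ 16 * L^2 := by
    intro n hn
    have hnI : n ∈ Finset.Icc 1 l := Finset.mem_of_mem_erase hn
    have hnm : n ≠ m := Finset.ne_of_mem_erase hn
    have h1 : |8 * aa l m * aa l n / (EE l n - EE l m)| ≤ 8 := by
      have e : 8 * aa l m * aa l n / (EE l n - EE l m)
          = (8 * aa l n) * (aa l m / (EE l n - EE l m)) := by ring
      rw [e, abs_mul, abs_of_nonneg (mul_nonneg (by norm_num) (aa_nonneg l n))]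
      have hf : |aa l m / (EE l n - EE l m)| ≤ L/2 := frac_bound2 hm hnI (fun h => hnm h.symm)
      have han : aa l n ≤ 2/L := aa_le l n
      calc (8 * aa l n) * |aa l m / (EE l n - EE l m)| ≤ (8 * (2/L)) * (L/2) := by
            apply mul_le_mul (by linarith) hf (abs_nonneg _) (by positivity)
      _ = 8 := by field_simp
    have h2 : |cc l m + cc l n - (∑ k ∈ (Finset.Icc 1 l).erase m, aa l k / (EE l k - EE l m))
            + aa l m / (EE l n - EE l m)| ≤ 2 * L^2 := by
      have b1 := cc_bound hm
      have b2 := cc_bound hnI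
      have b4 : |aa l m / (EE l n - EE l m)| ≤ L/2 := frac_bound2 hm hnI (fun h => hnm h.symm)
      set A := cc l m
      set B := cc l n
      set C := ∑ k ∈ (Finset.Icc 1 l).erase m, aa l k / (EE l k - EE l m)
      set D := aa l m / (EE l n - EE l m)
      have habs : |A + B - C + D| ≤ |A| + |B| + |C| + |D| := by
        calc |A + B - C + D| ≤ |A + B - C| + |D| := abs_add_le _ _
        _ ≤ |A + B| + |C| + |D| := by linarith [abs_sub (A+B) C]
        _ ≤ |A| + |B| + |C| + |D| := by linarith [abs_add_le A B]
      have hlL' : (l:ℝ) * (L/2) ≤ (L-1) * (L/2) :=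
        mul_le_mul_of_nonneg_right hlL (by positivity)
      nlinarith [hLpos, habs, b1, b2, hS, b4]
    calc _ = |8 * aa l m * aa l n / (EE l n - EE l m)| * |_| := abs_mul _ _
    _ ≤ 8 * (2 * L^2) := mul_le_mul h1 h2 (abs_nonneg _) (by norm_num)
    _ = 16 * L^2 := by ring
  calc |∑ n ∈ (Finset.Icc 1 l).erase m, _| ≤ ∑ n ∈ (Finset.Icc 1 l).erase m,
        |(8 * aa l m * aa l n / (EE l n - EE l m)) *
          (cc l m + cc l n - (∑ k ∈ (Finset.Icc 1 l).erase m, aa l k / (EE l k - EE l m))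
            + aa l m / (EE l n - EE l m))| := Finset.abs_sum_le_sum_abs _ _
  _ ≤ ∑ _n ∈ (Finset.Icc 1 l).erase m, 16 * L^2 := Finset.sum_le_sum hterm
  _ = ((Finset.Icc 1 l).erase m).card * (16 * L^2) := by rw [Finset.sum_const, nsmul_eq_mul]
  _ ≤ (l:ℝ) * (16 * L^2) := by
        apply mul_le_mul_of_nonneg_right _ (by positivity)
        have : ((Finset.Icc 1 l).erase m).card ≤ l := by
          calc _ ≤ (Finset.Icc 1 l).card := Finset.card_erase_le
          _ = l := by simp
        exact_mod_cast this
  _ < L * (16 * L^2) := by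
        apply mul_lt_mul_of_pos_right _ (by positivity)
        simp [hL]
  _ = 16 * L^3 := by ring
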